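/- Let γ ≥ 3 and n ≥ 2(γ+1) be integers. The energy of the circulant graph C^{1,γ}_n equals 4·∑_{m∈{1,γ}} ( ∑_{l=0}^{⌈γ/2⌉−1} D_{⌊(2l+1)n/(2(γ+1))⌋}(2πm/n) − ∑_{l=0}^{⌈γ/2⌉−2} D_{⌊(2l+1)n/(2(γ−1))⌋}(2πm/n) ), where D_m(x) = sin((m+1/2)x)/sin(x/2) is the Dirichlet kernel, ⌊·⌋ is the floor function and ⌈·⌉ is the ceiling function. -/

import Mathlib

open Real Finset Matrix

/-- The circulant graph `C^{1,γ}_n` on vertex set `ℤ/nℤ`: distinct vertices `u, v`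
are adjacent iff `u - v ∈ {1, -1, γ, -γ}` (mod `n`). -/
def circGraph (n γ : ℕ) : SimpleGraph (ZMod n) :=
  SimpleGraph.circulantGraph ({1, (γ : ZMod n)} : Set (ZMod n))

noncomputable instance (n γ : ℕ) : DecidableRel (circGraph n γ).Adj :=
  Classical.decRel _

/-- The adjacency matrix of a finite simple graph is Hermitian as a real matrix. -/
theorem adjMatrix_isHermitian {V : Type*} [Fintype V] [DecidableEq V]
    (G : SimpleGraph V) [DecidableRel G.Adj] : (G.adjMatrix ℝ).IsHermitian := by
  rw [Matrix.IsHermitian, Matrix.conjTranspose_eq_transpose_of_trivial]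
  exact G.isSymm_adjMatrix

/-- The energy of a finite simple graph: the sum of the absolute values of the
eigenvalues (with multiplicity) of its adjacency matrix. -/
noncomputable def graphEnergy {V : Type*} [Fintype V] [DecidableEq V]
    (G : SimpleGraph V) [DecidableRel G.Adj] : ℝ :=
  ∑ i, |(adjMatrix_isHermitian G).eigenvalues i|

/-- The Dirichlet kernel `D_m(x) = sin((m + 1/2)x) / sin(x/2)`. -/
noncomputable def DKern (m : ℕ) (x : ℝ) : ℝ :=
  Real.sin ((m + 1 / 2) * x) / Real.sin (x / 2)


namespace EnergyCircAux

open Polynomial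


/-- cos (x + k*π) = (-1)^k cos x -/
lemma cos_add_nat_mul_pi (x : ℝ) (k : ℕ) : Real.cos (x + k * π) = (-1)^k * Real.cos x := by
  induction k with
  | zero => simp
  | succ k ih =>
    have : x + ((k:ℝ)+1) * π = (x + k * π) + π := by ring
    rw [Nat.cast_succ, this, Real.cos_add_pi, ih, pow_succ]
    ring

/-- the key counting characterization: for the downward-closed predicate
`(2l+1)*N < C` bounded by `L`, membership is equivalent to being below the count. -/
lemma count_char {L C N : ℕ} (hb : ∀ l, (2*l+1) * N < C → l < L) (l : ℕ) :
    (2*l+1) * N < C ↔ l < (((range L).filter (fun l => (2*l+1) * N < C)).card) := by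
  classical
  have hdc : ∀ {a b : ℕ}, a ≤ b → (2*b+1) * N < C → (2*a+1) * N < C := by
    intro a b hab h
    exact lt_of_le_of_lt (Nat.mul_le_mul_right N (by omega)) h
  have hex : ∃ l, ¬ ((2*l+1) * N < C) := ⟨L, fun h => absurd (hb L h) (lt_irrefl L)⟩
  set m := Nat.find hex with hm
  have hiff : ∀ l, ((2*l+1) * N < C ↔ l < m) := by
    intro l
    constructor
    · intro h
      by_contra hlm
      push_neg at hlm
      exact Nat.find_spec hex (hdc hlm h)
    · intro h
      have := Nat.find_min hex h
      simpa using this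
  have hfe : (range L).filter (fun l => (2*l+1) * N < C) = range m := by
    ext x
    simp only [mem_filter, mem_range]
    constructor
    · rintro ⟨-, h⟩; exact (hiff x).1 h
    · intro h; exact ⟨hb x ((hiff x).2 h), (hiff x).2 h⟩
  rw [hfe, card_range]
  exact hiff l

/-- sign of a cosine from the count -/
lemma sign_cos {N c k cnt : ℕ} (hN : 0 < N)
    (hchar : ∀ l, ((2*l+1) * N < 2*k*c ↔ l < cnt)) :
    0 ≤ (-1)^cnt * Real.cos (π * c * k / N) := by
  have hNR : (0:ℝ) < N := by exact_mod_cast hN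
  have hub : (2*(k:ℝ)*c) ≤ (2*cnt+1) * N := by
    have := (hchar cnt).not.2 (lt_irrefl cnt)
    push_neg at this
    exact_mod_cast this
  have hy : π * c * k / N = (π * ((c*k:ℝ)/N - cnt)) + cnt * π := by
    field_simp
    ring
  rw [hy, cos_add_nat_mul_pi, ← mul_assoc]
  have h1 : ((-1:ℝ))^cnt * (-1)^cnt = 1 := by
    rw [← pow_add]
    exact Even.neg_one_pow ⟨cnt, rfl⟩
  rw [h1, one_mul]
  set y : ℝ := (c*k:ℝ)/N with hydef
  have hyub : y - cnt ≤ 1/2 := by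
    rw [hydef, sub_le_iff_le_add, div_le_iff₀ hNR]
    nlinarith [hub]
  have hylb : -(1/2:ℝ) ≤ y - cnt := by
    rcases Nat.eq_zero_or_pos cnt with h0 | hpos
    · have : (0:ℝ) ≤ y := by positivity
      rw [h0]
      push_cast
      linarith
    · obtain ⟨c', rfl⟩ : ∃ c', cnt = c' + 1 := ⟨cnt - 1, by omega⟩
      have hlb : ((2*c'+1) * N : ℝ) < 2*k*c := by
        exact_mod_cast (hchar c').2 (Nat.lt_succ_self c')
      have hy2 : ((c':ℝ) + 1/2) < y := by
        rw [hydef, lt_div_iff₀ hNR]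
        nlinarith [hlb]
      push_cast
      linarith
  apply Real.cos_nonneg_of_mem_Icc
  constructor
  · nlinarith [Real.pi_pos]
  · nlinarith [Real.pi_pos]

lemma dkern_sum (M : ℕ) (x : ℝ) (hx : Real.sin (x/2) ≠ 0) :
    Real.sin (((M:ℝ) + 1/2) * x) / Real.sin (x/2)
      = 1 + 2 * ∑ k ∈ Finset.range M, Real.cos (((k:ℝ)+1) * x) := by
  rw [div_eq_iff hx]
  have key : ∀ k:ℕ, Real.sin ((((k:ℝ)+1) + 1/2)*x) - Real.sin (((k:ℝ)+1/2)*x)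
      = 2 * Real.sin (x/2) * Real.cos (((k:ℝ)+1)*x) := by
    intro k
    have ha : (((((k:ℝ)+1)+1/2)*x + ((k:ℝ)+1/2)*x))/2 = ((k:ℝ)+1)*x := by ring
    have hb : (((((k:ℝ)+1)+1/2)*x - ((k:ℝ)+1/2)*x))/2 = x/2 := by ring
    rw [Real.sin_sub_sin, ha, hb]
  have tel := Finset.sum_range_sub (fun k => Real.sin (((k:ℝ)+1/2)*x)) M
  simp only [Nat.cast_succ] at tel
  rw [Finset.sum_congr rfl (fun k _ => key k), ← Finset.mul_sum] at tel
  have h0 : ((((0:ℕ):ℝ)+1/2))*x = x/2 := by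
    push_cast
    ring
  rw [h0] at tel
  linear_combination -tel

lemma window_sum (n m M : ℕ) (hn : 0 < n) (hM : 2*M < n) :
    ∑ j ∈ Finset.range n, (if min j (n - j) ≤ M then (1:ℝ) else 0) * Real.cos (2*π*m*j/n)
      = 1 + 2 * ∑ k ∈ Finset.range M, Real.cos (2*π*m*((k:ℝ)+1)/n) := by
  have hnR : ((n:ℝ)) ≠ 0 := by positivity
  simp only [ite_mul, one_mul, zero_mul]
  rw [← Finset.sum_filter]
  have hset : (Finset.range n).filter (fun j => min j (n - j) ≤ M)
      = Finset.range (M+1) ∪ Finset.Ico (n-M) n := by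
    ext j
    simp only [Finset.mem_filter, Finset.mem_range, Finset.mem_union, Finset.mem_Ico]
    omega
  have hdisj : Disjoint (Finset.range (M+1)) (Finset.Ico (n-M) n) := by
    rw [Finset.disjoint_left]
    intro j hj hj'
    simp only [Finset.mem_range] at hj
    simp only [Finset.mem_Ico] at hj'
    omega
  rw [hset, Finset.sum_union hdisj]
  have h1 : ∑ j ∈ Finset.range (M+1), Real.cos (2*π*m*j/n)
      = (∑ k ∈ Finset.range M, Real.cos (2*π*m*((k:ℝ)+1)/n)) + 1 := by
    rw [Finset.sum_range_succ']
    congr 1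
    · apply Finset.sum_congr rfl
      intro k _
      push_cast
      norm_num
    · norm_num
  have h2 : ∑ j ∈ Finset.Ico (n-M) n, Real.cos (2*π*m*j/n)
      = ∑ k ∈ Finset.range M, Real.cos (2*π*m*((k:ℝ)+1)/n) := by
    rw [Finset.sum_Ico_eq_sum_range]
    have hMn : n - (n - M) = M := by omega
    rw [hMn]
    rw [← Finset.sum_range_reflect]
    apply Finset.sum_congr rfl
    intro j hj
    simp only [Finset.mem_range] at hj
    have hidx : (n - M + (M - 1 - j)) = n - (j+1) := by omega
    rw [hidx]
    have hcast : ((n - (j+1) : ℕ) : ℝ) = (n:ℝ) - ((j:ℝ)+1) := by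
      have : j + 1 ≤ n := by omega
      push_cast [Nat.cast_sub this]
      ring
    rw [hcast]
    have harg : 2*π*(m:ℝ)*((n:ℝ)-((j:ℝ)+1))/(n:ℝ) = (m:ℝ)*(2*π) - 2*π*(m:ℝ)*((j:ℝ)+1)/(n:ℝ) := by
      field_simp
    rw [harg, Real.cos_nat_mul_two_pi_sub]
  rw [h1, h2]
  ring

lemma sum_cos_eq_zero {n m : ℕ} (hm : 0 < m) (hmn : m < n) :
    ∑ j ∈ Finset.range n, Real.cos (2*π*m*j/n) = 0 := by
  have hn : 0 < n := lt_trans hm hmn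
  have hnC : (n:ℂ) ≠ 0 := by exact_mod_cast hn.ne'
  set z : ℂ := Complex.exp (2*π*Complex.I*m/n) with hzdef
  have hprim := Complex.isPrimitiveRoot_exp n hn.ne'
  have hzpow : z = Complex.exp (2*π*Complex.I/n) ^ m := by
    rw [hzdef, ← Complex.exp_nat_mul]
    congr 1
    field_simp
  have hz1 : z ≠ 1 := by
    rw [hzpow]
    exact hprim.pow_ne_one_of_pos_of_lt hm.ne' hmn
  have hzn : z ^ n = 1 := by
    rw [hzdef, ← Complex.exp_nat_mul]
    have : (n:ℂ) * (2*π*Complex.I*m/n) = (m:ℤ) * (2*π*Complex.I) := by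
      field_simp
      norm_cast
    rw [this, Complex.exp_int_mul_two_pi_mul_I]
  have hgeom : ∑ j ∈ Finset.range n, z ^ j = 0 := by
    rw [geom_sum_eq hz1, hzn]
    simp
  have hre : ∀ j : ℕ, Real.cos (2*π*m*j/n) = (z ^ j).re := by
    intro j
    have : z ^ j = Complex.exp (((2*π*m*j/n : ℝ)) * Complex.I) := by
      rw [hzdef, ← Complex.exp_nat_mul]
      congr 1
      push_cast
      field_simp
    rw [this, Complex.exp_ofReal_mul_I_re]
  rw [Finset.sum_congr rfl (fun j _ => hre j), ← Complex.re_sum, hgeom]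
  simp

/-- the eigenvalue function -/
noncomputable def Ff (n γ j : ℕ) : ℝ :=
  2 * Real.cos (2*π*j/n) + 2 * Real.cos (2*π*γ*j/n)

lemma Ff_reflect {n γ j : ℕ} (hn : 0 < n) (hj : j ≤ n) : Ff n γ (n - j) = Ff n γ j := by
  have hnR : ((n:ℝ)) ≠ 0 := by positivity
  have hc : ((n - j : ℕ) : ℝ) = (n:ℝ) - j := by
    push_cast [Nat.cast_sub hj]
    ring
  unfold Ff
  rw [hc]
  have h1 : 2*π*((n:ℝ) - j)/n = (1:ℕ)*(2*π) - 2*π*j/n := by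
    field_simp
    ring
  have h2 : 2*π*(γ:ℝ)*((n:ℝ) - j)/n = (γ:ℕ)*(2*π) - 2*π*γ*j/n := by
    field_simp
  rw [h1, h2, Real.cos_nat_mul_two_pi_sub, Real.cos_nat_mul_two_pi_sub]

/-- weight: number of windows (for `γ+1`) containing  `k` -/
def w1 (n γ k : ℕ) : ℕ :=
  ((Finset.range ((γ+1)/2)).filter (fun l => k ≤ (2*l+1)*n/(2*(γ+1)))).card

/-- weight: number of windows (for `γ-1`) containing `k` -/
def w2 (n γ k : ℕ) : ℕ :=
  ((Finset.range ((γ+1)/2 - 1)).filter (fun l => k ≤ (2*l+1)*n/(2*(γ-1)))).card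

lemma pointwise (n γ k : ℕ) (hγ : 3 ≤ γ) (hn : 2*(γ+1) ≤ n) (hk : 2*k ≤ n) :
    |Ff n γ k| = (2*(((w1 n γ k : ℕ):ℝ) - ((w2 n γ k : ℕ):ℝ)) - 1) * Ff n γ k := by
  have hn0 : 0 < n := by omega
  have hnR : ((n:ℝ)) ≠ 0 := by positivity
  set L₁ := (γ+1)/2 with hL₁
  set L₂ := (γ+1)/2 - 1 with hL₂
  set M₁ := ((Finset.range L₁).filter (fun l => (2*l+1)*n < 2*k*(γ+1))).card with hM₁
  set M₂ := ((Finset.range L₂).filter (fun l => (2*l+1)*n < 2*k*(γ-1))).card with hM₂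
  -- bounds
  have hb₁ : ∀ l, (2*l+1)*n < 2*k*(γ+1) → l < L₁ := by
    intro l h
    have h2 : 2*k*(γ+1) ≤ n*(γ+1) := Nat.mul_le_mul_right _ hk
    have h3 : (2*l+1)*n < (γ+1)*n := by
      calc (2*l+1)*n < 2*k*(γ+1) := h
        _ ≤ n*(γ+1) := h2
        _ = (γ+1)*n := Nat.mul_comm _ _
    have := Nat.lt_of_mul_lt_mul_right h3
    omega
  have hb₂ : ∀ l, (2*l+1)*n < 2*k*(γ-1) → l < L₂ := by
    intro l h
    have h2 : 2*k*(γ-1) ≤ n*(γ-1) := Nat.mul_le_mul_right _ hk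
    have h3 : (2*l+1)*n < (γ-1)*n := by
      calc (2*l+1)*n < 2*k*(γ-1) := h
        _ ≤ n*(γ-1) := h2
        _ = (γ-1)*n := Nat.mul_comm _ _
    have := Nat.lt_of_mul_lt_mul_right h3
    omega
  have hchar₁ := count_char (C := 2*k*(γ+1)) (N := n) hb₁
  have hchar₂ := count_char (C := 2*k*(γ-1)) (N := n) hb₂
  rw [← hM₁] at hchar₁
  rw [← hM₂] at hchar₂
  -- complement counts
  have hM1le : M₁ ≤ L₁ := by
    rw [hM₁]
    simpa using Finset.card_filter_le (Finset.range L₁) (fun l => (2*l+1)*n < 2*k*(γ+1))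
  have hM2le : M₂ ≤ L₂ := by
    rw [hM₂]
    simpa using Finset.card_filter_le (Finset.range L₂) (fun l => (2*l+1)*n < 2*k*(γ-1))
  have hw1 : w1 n γ k = L₁ - M₁ := by
    rw [w1, ← hL₁]
    have hflt : Finset.filter (fun l => k ≤ (2*l+1)*n/(2*(γ+1))) (Finset.range L₁)
        = Finset.Ico M₁ L₁ := by
      ext l
      simp only [Finset.mem_filter, Finset.mem_range, Finset.mem_Ico]
      rw [Nat.le_div_iff_mul_le (by omega : 0 < 2*(γ+1))]
      have h1 := hchar₁ l
      have hcomm : k*(2*(γ+1)) = 2*k*(γ+1) := by ring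
      constructor
      · rintro ⟨hlL, hk2⟩
        refine ⟨?_, hlL⟩
        by_contra hlt
        push_neg at hlt
        have := h1.2 hlt
        omega
      · rintro ⟨hMl, hlL⟩
        refine ⟨hlL, ?_⟩
        have hnp : ¬((2*l+1)*n < 2*k*(γ+1)) := fun hc => by
          have := h1.1 hc
          omega
        omega
    rw [hflt, Nat.card_Ico]
  have hw2 : w2 n γ k = L₂ - M₂ := by
    rw [w2, ← hL₂]
    have hflt : Finset.filter (fun l => k ≤ (2*l+1)*n/(2*(γ-1))) (Finset.range L₂)
        = Finset.Ico M₂ L₂ := by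
      ext l
      simp only [Finset.mem_filter, Finset.mem_range, Finset.mem_Ico]
      rw [Nat.le_div_iff_mul_le (by omega : 0 < 2*(γ-1))]
      have h1 := hchar₂ l
      have hcomm : k*(2*(γ-1)) = 2*k*(γ-1) := by ring
      constructor
      · rintro ⟨hlL, hk2⟩
        refine ⟨?_, hlL⟩
        by_contra hlt
        push_neg at hlt
        have := h1.2 hlt
        omega
      · rintro ⟨hMl, hlL⟩
        refine ⟨hlL, ?_⟩
        have hnp : ¬((2*l+1)*n < 2*k*(γ-1)) := fun hc => by
          have := h1.1 hc
          omega
        omega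
    rw [hflt, Nat.card_Ico]
  -- M₂ ≤ M₁ ≤ M₂ + 1
  have hle : ∀ l, (2*l+1)*n < 2*k*(γ-1) → (2*l+1)*n < 2*k*(γ+1) := by
    intro l h
    exact lt_of_lt_of_le h (Nat.mul_le_mul_left _ (by omega))
  have hM21 : M₂ ≤ M₁ := by
    rcases Nat.eq_zero_or_pos M₂ with h0 | hpos
    · omega
    · have := (hchar₁ (M₂ - 1)).1 (hle _ ((hchar₂ (M₂-1)).2 (by omega)))
      omega
  have hM12 : M₁ ≤ M₂ + 1 := by
    by_contra hcon
    push_neg at hcon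
    have h1 : (2*(M₂+1)+1)*n < 2*k*(γ+1) := (hchar₁ (M₂+1)).2 (by omega)
    have h2 : ¬((2*M₂+1)*n < 2*k*(γ-1)) := fun h => by
      have := (hchar₂ M₂).1 h
      omega
    push_neg at h2
    have hsplit : 2*k*(γ+1) = 2*k*(γ-1) + 4*k := by
      rw [show γ+1 = (γ-1)+2 by omega, Nat.mul_add]
      ring
    have e2 : 4*k ≤ 2*n := by omega
    have hcontra : 2*k*(γ+1) ≤ (2*(M₂+1)+1)*n := by
      calc 2*k*(γ+1) = 2*k*(γ-1) + 4*k := hsplit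
        _ ≤ (2*M₂+1)*n + 2*n := Nat.add_le_add h2 e2
        _ = (2*(M₂+1)+1)*n := by ring
    exact absurd h1 (not_lt.2 hcontra)
  -- product form
  have hA : (2*π*(k:ℝ)/n + 2*π*γ*k/n)/2 = π*((γ:ℝ)+1)*k/n := by ring
  have hB : (2*π*(k:ℝ)/n - 2*π*γ*k/n)/2 = -(π*((γ:ℝ)-1)*k/n) := by ring
  have hcc := Real.cos_add_cos (2*π*(k:ℝ)/n) (2*π*γ*k/n)
  rw [hA, hB, Real.cos_neg] at hcc
  have hprod : Ff n γ k = 4 * (Real.cos (π*((γ:ℝ)+1)*k/n) * Real.cos (π*((γ:ℝ)-1)*k/n)) := by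
    unfold Ff
    rw [show 2 * Real.cos (2*π*(k:ℝ)/n) + 2 * Real.cos (2*π*γ*k/n)
        = 2*(Real.cos (2*π*(k:ℝ)/n) + Real.cos (2*π*γ*k/n)) by ring, hcc]
    ring
  -- signs
  have s1 := sign_cos (N := n) (c := γ+1) (k := k) (cnt := M₁) hn0 hchar₁
  have s2 := sign_cos (N := n) (c := γ-1) (k := k) (cnt := M₂) hn0 hchar₂
  have hcast1 : ((γ+1 : ℕ):ℝ) = (γ:ℝ)+1 := by push_cast; ring
  have hcast2 : ((γ-1 : ℕ):ℝ) = (γ:ℝ)-1 := by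
    push_cast [Nat.cast_sub (show 1 ≤ γ by omega)]
    ring
  rw [hcast1] at s1
  rw [hcast2] at s2
  -- weight values in ℝ
  have hw1R : ((w1 n γ k : ℕ):ℝ) = (L₁:ℝ) - M₁ := by
    rw [hw1]
    push_cast [Nat.cast_sub hM1le]
    ring
  have hw2R : ((w2 n γ k : ℕ):ℝ) = (L₂:ℝ) - M₂ := by
    rw [hw2]
    push_cast [Nat.cast_sub hM2le]
    ring
  have hLL : (L₁:ℝ) - (L₂:ℝ) = 1 := by
    have h1 : L₂ + 1 = L₁ := by omega
    have := congrArg (fun t : ℕ => (t:ℝ)) h1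
    push_cast at this
    linarith
  have hmul := mul_nonneg s1 s2
  rcases (show M₁ = M₂ ∨ M₁ = M₂ + 1 by omega) with hcase | hcase
  · -- positive case
    have he : ((-1:ℝ))^M₁ * (-1)^M₂ = 1 := by
      rw [hcase, ← pow_add]
      exact Even.neg_one_pow ⟨M₂, rfl⟩
    have hcc2 : 0 ≤ Real.cos (π*((γ:ℝ)+1)*k/n) * Real.cos (π*((γ:ℝ)-1)*k/n) := by
      have heq : (-1:ℝ)^M₁ * Real.cos (π*((γ:ℝ)+1)*k/n) * ((-1:ℝ)^M₂ * Real.cos (π*((γ:ℝ)-1)*k/n))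
          = Real.cos (π*((γ:ℝ)+1)*k/n) * Real.cos (π*((γ:ℝ)-1)*k/n) := by
        linear_combination (Real.cos (π*((γ:ℝ)+1)*k/n) * Real.cos (π*((γ:ℝ)-1)*k/n)) * he
      rw [heq] at hmul
      exact hmul
    have hFpos : 0 ≤ Ff n γ k := by rw [hprod]; linarith
    rw [abs_of_nonneg hFpos, hw1R, hw2R, hcase]
    rw [show (2*(((L₁:ℝ) - (M₂:ℝ)) - ((L₂:ℝ) - (M₂:ℝ))) - 1) = 1 from by linarith, one_mul]
  · -- negative case
    have h22 : ((-1:ℝ))^M₂ * (-1)^M₂ = 1 := by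
      rw [← pow_add]
      exact Even.neg_one_pow ⟨M₂, rfl⟩
    have he : ((-1:ℝ))^M₁ * (-1)^M₂ = -1 := by
      rw [hcase, pow_succ]
      linear_combination -h22
    have hcc2 : Real.cos (π*((γ:ℝ)+1)*k/n) * Real.cos (π*((γ:ℝ)-1)*k/n) ≤ 0 := by
      have heq : (-1:ℝ)^M₁ * Real.cos (π*((γ:ℝ)+1)*k/n) * ((-1:ℝ)^M₂ * Real.cos (π*((γ:ℝ)-1)*k/n))
          = -(Real.cos (π*((γ:ℝ)+1)*k/n) * Real.cos (π*((γ:ℝ)-1)*k/n)) := by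
        linear_combination (Real.cos (π*((γ:ℝ)+1)*k/n) * Real.cos (π*((γ:ℝ)-1)*k/n)) * he
      rw [heq] at hmul
      linarith
    have hFneg : Ff n γ k ≤ 0 := by rw [hprod]; linarith
    rw [abs_of_nonpos hFneg, hw1R, hw2R, hcase]
    push_cast
    rw [show (2*(((L₁:ℝ) - ((M₂:ℝ)+1)) - ((L₂:ℝ) - (M₂:ℝ))) - 1) = -1 from by linarith]
    ring

lemma dkern_window (n m M : ℕ) (hm : 0 < m) (hmn : m < n) (hM : 2*M < n) :
    DKern M (2*π*m/n)
      = ∑ j ∈ Finset.range n, (if min j (n - j) ≤ M then (1:ℝ) else 0) * Real.cos (2*π*m*j/n) := by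
  have hn0 : 0 < n := lt_trans hm hmn
  have hnR : (0:ℝ) < n := by exact_mod_cast hn0
  have hmR : (0:ℝ) < m := by exact_mod_cast hm
  have hsinpos : 0 < Real.sin ((2*π*m/n)/2) := by
    rw [show (2*π*(m:ℝ)/n)/2 = π*((m:ℝ)/n) by ring]
    apply Real.sin_pos_of_pos_of_lt_pi
    · positivity
    · have h1 : (m:ℝ)/n < 1 := (div_lt_one hnR).2 (by exact_mod_cast hmn)
      nlinarith [Real.pi_pos]
  rw [window_sum n m M hn0 hM]
  unfold DKern
  rw [dkern_sum M _ (ne_of_gt hsinpos)]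
  congr 1
  congr 1
  apply Finset.sum_congr rfl
  intro k _
  congr 1
  ring

lemma partII (n γ : ℕ) (hγ : 3 ≤ γ) (hn : 2*(γ+1) ≤ n) :
    ∑ j ∈ Finset.range n, |Ff n γ j| =
      4 * ∑ m ∈ ({1, γ} : Finset ℕ),
        ((∑ l ∈ Finset.range ((γ + 1) / 2),
            DKern ((2 * l + 1) * n / (2 * (γ + 1))) (2 * π * m / n)) -
         (∑ l ∈ Finset.range ((γ + 1) / 2 - 1),
            DKern ((2 * l + 1) * n / (2 * (γ - 1))) (2 * π * m / n))) := by
  have hn0 : 0 < n := by omega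
  have hnR : (0:ℝ) < n := by exact_mod_cast hn0
  have ha : ∀ l ∈ Finset.range ((γ+1)/2), 2*((2*l+1)*n/(2*(γ+1))) < n := by
    intro l hl
    simp only [Finset.mem_range] at hl
    have h1 : 2*l+1 ≤ γ := by omega
    set q := (2*l+1)*n/(2*(γ+1)) with hq
    have h2 : q * (2*(γ+1)) ≤ (2*l+1)*n := Nat.div_mul_le_self _ _
    by_contra hqc
    push_neg at hqc
    have h3 : n*(γ+1) ≤ q*(2*(γ+1)) := by
      calc n*(γ+1) ≤ (2*q)*(γ+1) := Nat.mul_le_mul_right _ hqc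
        _ = q*(2*(γ+1)) := by ring
    have h4 : (2*l+1)*n ≤ γ*n := Nat.mul_le_mul_right _ h1
    have h5 : γ*n < n*(γ+1) := by
      calc γ*n < γ*n + n := by omega
        _ = n*(γ+1) := by ring
    omega
  have hb : ∀ l ∈ Finset.range ((γ+1)/2 - 1), 2*((2*l+1)*n/(2*(γ-1))) < n := by
    intro l hl
    simp only [Finset.mem_range] at hl
    have h1 : 2*l+1 ≤ γ-2 := by omega
    set q := (2*l+1)*n/(2*(γ-1)) with hq
    have h2 : q * (2*(γ-1)) ≤ (2*l+1)*n := Nat.div_mul_le_self _ _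
    by_contra hqc
    push_neg at hqc
    have h3 : n*(γ-1) ≤ q*(2*(γ-1)) := by
      calc n*(γ-1) ≤ (2*q)*(γ-1) := Nat.mul_le_mul_right _ hqc
        _ = q*(2*(γ-1)) := by ring
    have h4 : (2*l+1)*n ≤ (γ-2)*n := Nat.mul_le_mul_right _ h1
    have h5 : (γ-2)*n < n*(γ-1) := by
      have e1 : (γ-2)*n + n = n*(γ-1) := by
        rw [show γ-1 = (γ-2)+1 by omega, Nat.mul_add]
        ring
      omega
    omega
  have key : ∀ m : ℕ, 0 < m → m < n →
      ((∑ l ∈ Finset.range ((γ+1)/2), DKern ((2*l+1)*n/(2*(γ+1))) (2*π*m/n))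
       - (∑ l ∈ Finset.range ((γ+1)/2 - 1), DKern ((2*l+1)*n/(2*(γ-1))) (2*π*m/n)))
      = ∑ j ∈ Finset.range n,
          (((w1 n γ (min j (n-j)) : ℕ):ℝ) - ((w2 n γ (min j (n-j)) : ℕ):ℝ))
            * Real.cos (2*π*m*j/n) := by
    intro m hm hmn
    rw [Finset.sum_congr rfl (fun l hl => dkern_window n m _ hm hmn (ha l hl)),
        Finset.sum_congr rfl (fun l hl => dkern_window n m _ hm hmn (hb l hl)),
        Finset.sum_comm (s := Finset.range ((γ+1)/2)),
        Finset.sum_comm (s := Finset.range ((γ+1)/2 - 1)), ← Finset.sum_sub_distrib]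
    apply Finset.sum_congr rfl
    intro j _
    rw [← Finset.sum_mul, ← Finset.sum_mul, ← sub_mul]
    congr 2
    · rw [Finset.sum_boole]
      rfl
    · rw [Finset.sum_boole]
      rfl
  have k1 := key 1 one_pos (show (1:ℕ) < n by omega)
  have kg := key γ (show 0 < γ by omega) (show γ < n by omega)
  rw [Finset.sum_pair (show (1:ℕ) ≠ γ by omega), k1, kg]
  have hsum1 : ∑ j ∈ Finset.range n, Real.cos (2*π*((1:ℕ):ℝ)*j/n) = 0 :=
    sum_cos_eq_zero one_pos (by omega)
  have hsumg : ∑ j ∈ Finset.range n, Real.cos (2*π*((γ:ℕ):ℝ)*j/n) = 0 :=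
    sum_cos_eq_zero (show 0 < γ by omega) (by omega)
  have hFsplit : ∀ j : ℕ, Ff n γ j
      = 2 * Real.cos (2*π*((1:ℕ):ℝ)*j/n) + 2 * Real.cos (2*π*((γ:ℕ):ℝ)*j/n) := by
    intro j
    unfold Ff
    norm_num
  have hsumF : ∑ j ∈ Finset.range n, Ff n γ j = 0 := by
    rw [Finset.sum_congr rfl (fun j _ => hFsplit j), Finset.sum_add_distrib,
      ← Finset.mul_sum, ← Finset.mul_sum, hsum1, hsumg]
    ring
  have hptw : ∀ j ∈ Finset.range n,
      |Ff n γ j| = (2*(((w1 n γ (min j (n-j)) : ℕ):ℝ) - ((w2 n γ (min j (n-j)) : ℕ):ℝ)) - 1)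
        * Ff n γ j := by
    intro j hj
    simp only [Finset.mem_range] at hj
    have hk2 : 2 * (min j (n-j)) ≤ n := by omega
    have hFeq : Ff n γ j = Ff n γ (min j (n-j)) := by
      rcases le_total j (n-j) with h | h
      · rw [min_eq_left h]
      · rw [min_eq_right h]
        exact (Ff_reflect hn0 (by omega)).symm
    rw [hFeq]
    exact pointwise n γ (min j (n-j)) hγ hn hk2
  rw [Finset.sum_congr rfl hptw]
  have expand : ∀ j ∈ Finset.range n,
      (2*(((w1 n γ (min j (n-j)) : ℕ):ℝ) - ((w2 n γ (min j (n-j)) : ℕ):ℝ)) - 1) * Ff n γ j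
      = 4 * ((((w1 n γ (min j (n-j)) : ℕ):ℝ) - ((w2 n γ (min j (n-j)) : ℕ):ℝ))
              * Real.cos (2*π*((1:ℕ):ℝ)*j/n)
           + (((w1 n γ (min j (n-j)) : ℕ):ℝ) - ((w2 n γ (min j (n-j)) : ℕ):ℝ))
              * Real.cos (2*π*((γ:ℕ):ℝ)*j/n)) - Ff n γ j := by
    intro j _
    rw [hFsplit j]
    ring
  rw [Finset.sum_congr rfl expand, Finset.sum_sub_distrib, hsumF, sub_zero,
    ← Finset.mul_sum, Finset.sum_add_distrib]
lemma charpoly_similar {N R : Type*} [Fintype N] [DecidableEq N] [CommRing R]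
    (A B P Q : Matrix N N R) (hPQ : P * Q = 1) (hQP : Q * P = 1) (hAP : A * P = P * B) :
    A.charpoly = B.charpoly := by
  have hA : A = P * B * Q := by
    calc A = A * (P * Q) := by rw [hPQ, Matrix.mul_one]
      _ = (A * P) * Q := by rw [Matrix.mul_assoc]
      _ = (P * B) * Q := by rw [hAP]
  set P' := (C : R →+* R[X]).mapMatrix P with hP'
  set Q' := (C : R →+* R[X]).mapMatrix Q with hQ'
  have hPQ' : P' * Q' = 1 := by
    rw [hP', hQ', ← _root_.map_mul, hPQ, _root_.map_one]
  have hQP' : Q' * P' = 1 := by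
    rw [hP', hQ', ← _root_.map_mul, hQP, _root_.map_one]
  have expand : ∀ M : Matrix N N R,
      Matrix.charmatrix M = Matrix.scalar N (X : R[X]) - (C : R →+* R[X]).mapMatrix M :=
    fun _ => rfl
  have hcm : Matrix.charmatrix A = P' * Matrix.charmatrix B * Q' := by
    rw [expand, expand, hA, _root_.map_mul, _root_.map_mul]
    rw [Matrix.mul_sub, Matrix.sub_mul]
    congr 1
    · symm
      have hc : Matrix.scalar N (X : R[X]) * P' = P' * Matrix.scalar N (X : R[X]) :=
        (Matrix.scalar_commute (X : R[X]) (fun r => Commute.all _ _) P').eq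
      calc P' * Matrix.scalar N (X : R[X]) * Q'
          = Matrix.scalar N (X : R[X]) * P' * Q' := by rw [← hc]
        _ = Matrix.scalar N (X : R[X]) * (P' * Q') := by rw [Matrix.mul_assoc]
        _ = Matrix.scalar N (X : R[X]) := by rw [hPQ', Matrix.mul_one]
  unfold Matrix.charpoly
  rw [hcm]
  calc (P' * Matrix.charmatrix B * Q').det
      = P'.det * (Matrix.charmatrix B).det * Q'.det := by rw [Matrix.det_mul, Matrix.det_mul]
    _ = (Matrix.charmatrix B).det * (Q'.det * P'.det) := by ring
    _ = (Matrix.charmatrix B).det * (Q' * P').det := by rw [Matrix.det_mul]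
    _ = (Matrix.charmatrix B).det := by rw [hQP', Matrix.det_one, mul_one]

lemma charpoly_diagonal {N R : Type*} [Fintype N] [DecidableEq N] [CommRing R] (d : N → R) :
    (Matrix.diagonal d).charpoly = ∏ i, (X - C (d i)) := by
  unfold Matrix.charpoly
  have h : Matrix.charmatrix (Matrix.diagonal d)
      = Matrix.diagonal (fun i => (X : R[X]) - C (d i)) := by
    ext i j
    by_cases hij : i = j
    · subst hij
      rw [Matrix.charmatrix_apply_eq, Matrix.diagonal_apply_eq, Matrix.diagonal_apply_eq]
    · rw [Matrix.charmatrix_apply_ne _ _ _ hij, Matrix.diagonal_apply_ne _ hij,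
        Matrix.diagonal_apply_ne _ hij, map_zero, neg_zero]
  rw [h, Matrix.det_diagonal]

/-- the character `x ↦ e^{2πi x/n}` on `ZMod n` -/
noncomputable def chi (n : ℕ) (x : ZMod n) : ℂ :=
  Complex.exp (2*π*Complex.I/n) ^ x.val

lemma chi_pow_mod (n : ℕ) [NeZero n] (a : ℕ) :
    Complex.exp (2*π*Complex.I/n) ^ (a % n) = Complex.exp (2*π*Complex.I/n) ^ a := by
  conv_rhs => rw [← Nat.div_add_mod a n]
  rw [pow_add, pow_mul, (Complex.isPrimitiveRoot_exp n (NeZero.ne n)).pow_eq_one, one_pow, one_mul]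

lemma chi_add (n : ℕ) [NeZero n] (x y : ZMod n) : chi n (x + y) = chi n x * chi n y := by
  unfold chi
  rw [← pow_add, ZMod.val_add, chi_pow_mod]

lemma chi_zero (n : ℕ) [NeZero n] : chi n 0 = 1 := by
  unfold chi
  rw [ZMod.val_zero, pow_zero]

lemma chi_mul_chi_neg (n : ℕ) [NeZero n] (x : ZMod n) : chi n x * chi n (-x) = 1 := by
  rw [← chi_add, add_neg_cancel, chi_zero]

lemma chi_ne_one (n : ℕ) [NeZero n] {c : ZMod n} (hc : c ≠ 0) : chi n c ≠ 1 := by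
  unfold chi
  apply (Complex.isPrimitiveRoot_exp n (NeZero.ne n)).pow_ne_one_of_pos_of_lt
  · exact (Nat.pos_of_ne_zero (fun h => hc ((ZMod.val_eq_zero c).1 h))).ne'
  · exact ZMod.val_lt c

lemma chi_sum_eq_zero (n : ℕ) [NeZero n] {c : ZMod n} (hc : c ≠ 0) :
    ∑ v : ZMod n, chi n (v * c) = 0 := by
  have hshift : ∑ v : ZMod n, chi n ((v + 1) * c) = ∑ v : ZMod n, chi n (v * c) :=
    Equiv.sum_comp (Equiv.addRight (1 : ZMod n)) (fun v => chi n (v * c))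
  have hexp : ∀ v : ZMod n, chi n ((v + 1) * c) = chi n (v * c) * chi n c := by
    intro v
    rw [add_mul, one_mul, chi_add]
  rw [Finset.sum_congr rfl (fun v _ => hexp v), ← Finset.sum_mul] at hshift
  have hfac : (∑ v : ZMod n, chi n (v * c)) * (chi n c - 1) = 0 := by
    rw [mul_sub, mul_one, hshift, sub_self]
  rcases mul_eq_zero.1 hfac with h | h
  · exact h
  · exact absurd (by linear_combination h : chi n c = 1) (chi_ne_one n hc)

/-- characteristic polynomial of a complex circulant matrix -/
lemma circulant_charpoly (n : ℕ) [NeZero n] (bc : ZMod n → ℂ) :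
    (Matrix.circulant bc).charpoly
      = ∏ k : ZMod n, (X - C (∑ w : ZMod n, bc w * chi n (-(w * k)))) := by
  set lam : ZMod n → ℂ := fun k => ∑ w : ZMod n, bc w * chi n (-(w * k)) with hlam
  set V : Matrix (ZMod n) (ZMod n) ℂ := Matrix.of (fun j k => chi n (j * k)) with hV
  set W : Matrix (ZMod n) (ZMod n) ℂ := Matrix.of (fun j k => ((n:ℂ))⁻¹ * chi n (-(j * k))) with hW
  have hnC : ((n:ℂ)) ≠ 0 := by
    exact_mod_cast (Nat.cast_ne_zero (R := ℂ)).2 (NeZero.ne n)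
  have horth : ∀ c : ZMod n, (∑ v : ZMod n, chi n (v * c)) = if c = 0 then (n:ℂ) else 0 := by
    intro c
    by_cases hc : c = 0
    · subst hc
      simp only [if_pos rfl, mul_zero, chi_zero]
      rw [Finset.sum_const, Finset.card_univ, ZMod.card]
      simp
    · rw [if_neg hc]
      exact chi_sum_eq_zero n hc
  have hVW : V * W = 1 := by
    ext j k
    simp only [hV, hW, Matrix.mul_apply, Matrix.of_apply]
    have : ∀ v : ZMod n, chi n (j*v) * ((n:ℂ)⁻¹ * chi n (-(v*k)))
        = (n:ℂ)⁻¹ * chi n (v * (j - k)) := by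
      intro v
      have h1 : chi n (j*v) * chi n (-(v*k)) = chi n (v * (j - k)) := by
        rw [← chi_add]
        congr 1
        ring
      rw [← h1]
      ring
    rw [Finset.sum_congr rfl (fun v _ => this v), ← Finset.mul_sum, horth]
    by_cases hjk : j = k
    · subst hjk
      simp [sub_self, inv_mul_cancel₀ hnC, Matrix.one_apply_eq]
    · rw [if_neg (fun h => hjk (sub_eq_zero.1 h)), Matrix.one_apply_ne hjk, mul_zero]
  have hWV : W * V = 1 := mul_eq_one_comm.1 hVW
  have hAP : Matrix.circulant bc * V = V * Matrix.diagonal lam := by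
    ext j k
    rw [Matrix.mul_diagonal]
    simp only [hV, Matrix.mul_apply, Matrix.of_apply, Matrix.circulant_apply]
    have hre : ∑ v : ZMod n, bc (j - v) * chi n (v * k)
        = ∑ w : ZMod n, bc w * chi n ((j - w) * k) := by
      apply Finset.sum_nbij' (fun v => j - v) (fun w => j - w) <;>
        intros <;> simp [Finset.mem_univ]
    rw [hre]
    have hsplit : ∀ w : ZMod n, bc w * chi n ((j - w) * k)
        = chi n (j * k) * (bc w * chi n (-(w * k))) := by
      intro w
      have : chi n ((j - w) * k) = chi n (j * k) * chi n (-(w * k)) := by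
        rw [← chi_add]
        congr 1
        ring
      rw [this]
      ring
    rw [Finset.sum_congr rfl (fun w _ => hsplit w), ← Finset.mul_sum]
  rw [charpoly_similar (Matrix.circulant bc) (Matrix.diagonal lam) V W hVW hWV hAP,
    charpoly_diagonal]

lemma charpoly_eigenvalues {N : Type*} [Fintype N] [DecidableEq N] {S : Matrix N N ℝ}
    (hS : S.IsHermitian) :
    S.charpoly = ∏ i, (X - C (hS.eigenvalues i)) := by
  have hspec := hS.spectral_theorem
  set U := (hS.eigenvectorUnitary : Matrix N N ℝ) with hUdef
  have hU1 : U * star U = 1 := (Matrix.mem_unitaryGroup_iff).mp hS.eigenvectorUnitary.2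
  have hU2 : star U * U = 1 := mul_eq_one_comm.1 hU1
  have hAP : S * U = U * Matrix.diagonal (RCLike.ofReal ∘ hS.eigenvalues) := by
    calc S * U = U * Matrix.diagonal (RCLike.ofReal ∘ hS.eigenvalues) * star U * U := by
          rw [Unitary.conjStarAlgAut_apply, ← hUdef] at hspec
          rw [← hspec]
      _ = U * Matrix.diagonal (RCLike.ofReal ∘ hS.eigenvalues) * (star U * U) := by
          rw [Matrix.mul_assoc]
      _ = U * Matrix.diagonal (RCLike.ofReal ∘ hS.eigenvalues) := by
          rw [hU2, Matrix.mul_one]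
  rw [charpoly_similar S _ U (star U) hU1 hU2 hAP, charpoly_diagonal]
  apply Finset.prod_congr rfl
  intro i _
  norm_num [Function.comp, RCLike.ofReal_real_eq_id]

lemma chi_apply_exp (n : ℕ) [NeZero n] (x : ZMod n) :
    chi n x = Complex.exp (((2*π*x.val/n : ℝ) : ℂ) * Complex.I) := by
  unfold chi
  rw [← Complex.exp_nat_mul]
  congr 1
  push_cast
  ring

lemma chi_ne_zero (n : ℕ) [NeZero n] (x : ZMod n) : chi n x ≠ 0 := by
  rw [chi_apply_exp]
  exact Complex.exp_ne_zero _

lemma chi_add_neg (n : ℕ) [NeZero n] (x : ZMod n) :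
    chi n x + chi n (-x) = (((2 * Real.cos (2*π*x.val/n)) : ℝ) : ℂ) := by
  have hinv : chi n (-x) = (chi n x)⁻¹ :=
    eq_inv_of_mul_eq_one_right (chi_mul_chi_neg n x)
  rw [hinv, chi_apply_exp, ← Complex.exp_neg, ← neg_mul, Complex.exp_mul_I, Complex.exp_mul_I,
    Complex.cos_neg, Complex.sin_neg]
  push_cast
  ring

lemma cos_natCast_mod (n a : ℕ) (hn : 0 < n) :
    Real.cos (2*π*((a % n : ℕ) : ℝ)/n) = Real.cos (2*π*(a:ℝ)/n) := by
  have hdm : (a:ℝ) = (n:ℝ)*((a/n : ℕ):ℝ) + ((a % n : ℕ):ℝ) := by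
    exact_mod_cast (Nat.div_add_mod a n).symm
  have hnR : ((n:ℝ)) ≠ 0 := by positivity
  rw [show 2*π*(a:ℝ)/n = 2*π*((a % n : ℕ):ℝ)/n + ((a/n : ℕ):ℝ)*(2*π) by
    rw [hdm]; field_simp; ring]
  rw [Real.cos_add_nat_mul_two_pi]



section PartI

variable (n γ : ℕ) [NeZero n]

lemma gamma_cast_facts (hγ : 3 ≤ γ) (hn : 2*(γ+1) ≤ n) :
    (γ : ZMod n) ≠ 0 ∧ ((1:ZMod n) ≠ -1) ∧ ((1:ZMod n) ≠ (γ : ZMod n))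
      ∧ ((1:ZMod n) ≠ -(γ:ZMod n)) ∧ ((-1:ZMod n) ≠ (γ:ZMod n))
      ∧ ((-1:ZMod n) ≠ -(γ:ZMod n)) ∧ ((γ:ZMod n) ≠ -(γ:ZMod n)) := by
  haveI : Fact (1 < n) := ⟨by omega⟩
  have hvγ : (γ : ZMod n).val = γ := ZMod.val_natCast_of_lt (by omega)
  have hv1 : (1 : ZMod n).val = 1 := ZMod.val_one n
  have hcast : ∀ a : ℕ, 0 < a → a < n → ((a : ZMod n) ≠ 0) := by
    intro a ha han h0
    rw [ZMod.natCast_eq_zero_iff] at h0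
    have := Nat.le_of_dvd ha h0
    omega
  have hγ0 : (γ : ZMod n) ≠ 0 := hcast γ (by omega) (by omega)
  refine ⟨hγ0, ?_, ?_, ?_, ?_, ?_, ?_⟩
  · intro h
    have h2 : ((2:ℕ) : ZMod n) = 0 := by push_cast; linear_combination h
    exact hcast 2 (by omega) (by omega) h2
  · intro h
    have := congrArg ZMod.val h
    rw [hvγ, hv1] at this
    omega
  · intro h
    have h2 : (((γ+1):ℕ) : ZMod n) = 0 := by push_cast; linear_combination h
    exact hcast (γ+1) (by omega) (by omega) h2
  · intro h
    have h2 : (((γ+1):ℕ) : ZMod n) = 0 := by push_cast; linear_combination -h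
    exact hcast (γ+1) (by omega) (by omega) h2
  · intro h
    have := congrArg ZMod.val (neg_injective h)
    rw [hvγ, hv1] at this
    omega
  · intro h
    have h2 : (((2*γ):ℕ) : ZMod n) = 0 := by push_cast; linear_combination h
    exact hcast (2*γ) (by omega) (by omega) h2

lemma adj_eq_circ (hγ : 3 ≤ γ) (hn : 2*(γ+1) ≤ n) :
    (circGraph n γ).adjMatrix ℝ = Matrix.circulant
      (fun v => if v ∈ ({1, -1, (γ:ZMod n), -(γ:ZMod n)} : Finset (ZMod n)) then (1:ℝ) else 0) := by
  obtain ⟨hγ0, h12, h13, h14, h23, h24, h34⟩ := gamma_cast_facts n γ hγ hn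
  haveI : Fact (1 < n) := ⟨by omega⟩
  ext u v
  rw [SimpleGraph.adjMatrix_apply, Matrix.circulant_apply]
  have hiff : (circGraph n γ).Adj u v
      ↔ u - v ∈ ({1, -1, (γ:ZMod n), -(γ:ZMod n)} : Finset (ZMod n)) := by
    rw [circGraph, SimpleGraph.circulantGraph, SimpleGraph.fromRel_adj]
    simp only [Set.mem_insert_iff, Set.mem_singleton_iff, Finset.mem_insert,
      Finset.mem_singleton]
    have e1 : (v - u = 1) ↔ (u - v = -1) := by
      constructor
      · intro h
        rw [← neg_sub v u, h]
      · intro h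
        rw [← neg_sub u v, h, neg_neg]
    have e2 : (v - u = (γ:ZMod n)) ↔ (u - v = -(γ:ZMod n)) := by
      constructor
      · intro h
        rw [← neg_sub v u, h]
      · intro h
        rw [← neg_sub u v, h, neg_neg]
    constructor
    · rintro ⟨hne, (h | h) | (h | h)⟩
      · exact Or.inl h
      · exact Or.inr (Or.inr (Or.inl h))
      · exact Or.inr (Or.inl (e1.1 h))
      · exact Or.inr (Or.inr (Or.inr (e2.1 h)))
    · intro h
      constructor
      · apply sub_ne_zero.mp
        rcases h with h | h | h | h <;> rw [h]
        · exact one_ne_zero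
        · exact neg_ne_zero.2 one_ne_zero
        · exact hγ0
        · exact neg_ne_zero.2 hγ0
      · rcases h with h | h | h | h
        · exact Or.inl (Or.inl h)
        · exact Or.inr (Or.inl (e1.2 h))
        · exact Or.inl (Or.inr h)
        · exact Or.inr (Or.inr (e2.2 h))
  rw [if_congr hiff rfl rfl]

lemma lam_eq_Ff (hγ : 3 ≤ γ) (hn : 2*(γ+1) ≤ n) (k : ZMod n) :
    ∑ w : ZMod n,
        (((if w ∈ ({1, -1, (γ:ZMod n), -(γ:ZMod n)} : Finset (ZMod n)) then (1:ℝ) else 0) : ℝ) : ℂ)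
          * chi n (-(w * k))
      = ((Ff n γ k.val : ℝ) : ℂ) := by
  have hn0 : 0 < n := by omega
  obtain ⟨hγ0, h12, h13, h14, h23, h24, h34⟩ := gamma_cast_facts n γ hγ hn
  have hsimp : ∀ w : ZMod n,
      (((if w ∈ ({1, -1, (γ:ZMod n), -(γ:ZMod n)} : Finset (ZMod n)) then (1:ℝ) else 0) : ℝ) : ℂ)
        * chi n (-(w * k))
      = if w ∈ ({1, -1, (γ:ZMod n), -(γ:ZMod n)} : Finset (ZMod n)) then chi n (-(w * k)) else 0 := by
    intro w
    split <;> simp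
  rw [Finset.sum_congr rfl (fun w _ => hsimp w), Finset.sum_ite_mem, Finset.univ_inter]
  have hm1 : (1:ZMod n) ∉ ({-1, (γ:ZMod n), -(γ:ZMod n)} : Finset (ZMod n)) := by
    simp [h12, h13, h14]
  have hm2 : (-1:ZMod n) ∉ ({(γ:ZMod n), -(γ:ZMod n)} : Finset (ZMod n)) := by
    simp [h23, h24]
  have hm3 : (γ:ZMod n) ∉ ({-(γ:ZMod n)} : Finset (ZMod n)) := by
    simp [h34]
  rw [show ({1, -1, (γ:ZMod n), -(γ:ZMod n)} : Finset (ZMod n))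
      = insert 1 (insert (-1) (insert (γ:ZMod n) {-(γ:ZMod n)})) from rfl,
    Finset.sum_insert hm1, Finset.sum_insert hm2, Finset.sum_insert hm3, Finset.sum_singleton]
  rw [show -((1:ZMod n)*k) = -k by ring, show -((-1:ZMod n)*k) = k by ring,
      show -(-(γ:ZMod n)*k) = (γ:ZMod n)*k by ring]
  have p1 : chi n k + chi n (-k) = ((2*Real.cos (2*π*k.val/n) : ℝ) : ℂ) := chi_add_neg n k
  have p2 : chi n ((γ:ZMod n)*k) + chi n (-((γ:ZMod n)*k))
      = ((2*Real.cos (2*π*(((γ:ZMod n)*k).val : ℕ)/n) : ℝ):ℂ) := chi_add_neg n _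
  have hval : ((γ:ZMod n)*k).val = (γ * k.val) % n := by
    rw [ZMod.val_mul, ZMod.val_natCast_of_lt (by omega : γ < n)]
  have hcos : Real.cos (2*π*((((γ:ZMod n)*k).val : ℕ):ℝ)/n) = Real.cos (2*π*(γ:ℝ)*(k.val:ℝ)/n) := by
    rw [hval, cos_natCast_mod n (γ * k.val) hn0,
      show 2*π*((γ*k.val : ℕ):ℝ)/n = 2*π*(γ:ℝ)*(k.val:ℝ)/n from by push_cast; ring]
  rw [hcos] at p2
  have hFf : ((Ff n γ k.val : ℝ) : ℂ)
      = ((2*Real.cos (2*π*k.val/n) : ℝ) : ℂ) + ((2*Real.cos (2*π*(γ:ℝ)*(k.val:ℝ)/n) : ℝ) : ℂ) := by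
    unfold Ff
    push_cast
    ring
  rw [hFf]
  linear_combination p1 + p2

lemma partI (hγ : 3 ≤ γ) (hn : 2*(γ+1) ≤ n) :
    graphEnergy (circGraph n γ) = ∑ j ∈ Finset.range n, |Ff n γ j| := by
  classical
  set b : ZMod n → ℝ :=
    fun v => if v ∈ ({1, -1, (γ:ZMod n), -(γ:ZMod n)} : Finset (ZMod n)) then (1:ℝ) else 0 with hb
  set bc : ZMod n → ℂ := fun v => ((b v : ℝ) : ℂ) with hbc
  have hAdj : (circGraph n γ).adjMatrix ℝ = Matrix.circulant b := adj_eq_circ n γ hγ hn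
  have hmap : ((circGraph n γ).adjMatrix ℝ).map (⇑Complex.ofRealHom) = Matrix.circulant bc := by
    rw [hAdj]
    ext u v
    simp [Matrix.circulant_apply, Matrix.map_apply, hbc]
  have hprodform : ∀ f : ZMod n → ℂ,
      ∏ i, (X - C (f i))
        = (Multiset.map (fun a => X - C a) (Multiset.map f Finset.univ.val)).prod := by
    intro f
    rw [Finset.prod_eq_multiset_prod, Multiset.map_map]
    rfl
  have hcp : ∏ i : ZMod n,
        (X - C ((((adjMatrix_isHermitian (circGraph n γ)).eigenvalues i : ℝ)) : ℂ))
      = ∏ k : ZMod n, (X - C (∑ w : ZMod n, bc w * chi n (-(w * k)))) := by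
    have h1 := Matrix.charpoly_map ((circGraph n γ).adjMatrix ℝ) Complex.ofRealHom
    rw [hmap, circulant_charpoly, charpoly_eigenvalues (adjMatrix_isHermitian (circGraph n γ)),
      Polynomial.map_prod] at h1
    rw [h1]
    apply Finset.prod_congr rfl
    intro i _
    rw [Polynomial.map_sub, Polynomial.map_X, Polynomial.map_C]
    rfl
  have hms := congrArg Polynomial.roots hcp
  rw [hprodform, hprodform, Polynomial.roots_multiset_prod_X_sub_C,
    Polynomial.roots_multiset_prod_X_sub_C] at hms
  unfold graphEnergy
  calc ∑ i : ZMod n, |(adjMatrix_isHermitian (circGraph n γ)).eigenvalues i|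
      = Multiset.sum (Multiset.map
          (fun i : ZMod n =>
            ‖((((adjMatrix_isHermitian (circGraph n γ)).eigenvalues i : ℝ)) : ℂ)‖)
          Finset.univ.val) := by
        rw [Finset.sum_congr rfl
          (fun i _ => ((Complex.norm_real ((adjMatrix_isHermitian (circGraph n γ)).eigenvalues i)).trans (Real.norm_eq_abs _)).symm)]
        rfl
    _ = Multiset.sum (Multiset.map (fun z : ℂ => ‖z‖) (Multiset.map
          (fun i : ZMod n => (((adjMatrix_isHermitian (circGraph n γ)).eigenvalues i : ℝ) : ℂ))
          Finset.univ.val)) := by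
        rw [Multiset.map_map]
        rfl
    _ = Multiset.sum (Multiset.map (fun z : ℂ => ‖z‖) (Multiset.map
          (fun k : ZMod n => ∑ w : ZMod n, bc w * chi n (-(w * k))) Finset.univ.val)) := by
        rw [hms]
    _ = ∑ k : ZMod n, ‖∑ w : ZMod n, bc w * chi n (-(w * k))‖ := by
        rw [Multiset.map_map]
        rfl
    _ = ∑ k : ZMod n, |Ff n γ k.val| := by
        apply Finset.sum_congr rfl
        intro k _
        simp only [hbc, hb]
        rw [lam_eq_Ff n γ hγ hn k, Complex.norm_real, Real.norm_eq_abs]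
    _ = ∑ j ∈ Finset.range n, |Ff n γ j| := by
        apply Finset.sum_nbij' (fun k : ZMod n => k.val) (fun j : ℕ => (j : ZMod n))
        · intro a _
          exact Finset.mem_range.2 (ZMod.val_lt a)
        · intro b _
          exact Finset.mem_univ _
        · intro a _
          exact ZMod.natCast_rightInverse a
        · intro b hb
          exact ZMod.val_natCast_of_lt (Finset.mem_range.1 hb)
        · intro a _
          rfl

end PartI

end EnergyCircAux

/-- For integers `γ ≥ 3` and `n ≥ 2(γ+1)`, the energy of the circulant graph `C^{1,γ}_n`
equals `4 ∑_{m∈{1,γ}} (∑_{l=0}^{⌈γ/2⌉-1} D_{⌊(2l+1)n/(2(γ+1))⌋}(2πm/n)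
  - ∑_{l=0}^{⌈γ/2⌉-2} D_{⌊(2l+1)n/(2(γ-1))⌋}(2πm/n))`.
Here `⌈γ/2⌉ = (γ+1)/2` and the floors `⌊·⌋` are given by natural number division. -/
theorem energy_circulant_general (n γ : ℕ) [NeZero n] (hγ : 3 ≤ γ)
    (hn : 2 * (γ + 1) ≤ n) :
    graphEnergy (circGraph n γ) =
      4 * ∑ m ∈ ({1, γ} : Finset ℕ),
        ((∑ l ∈ Finset.range ((γ + 1) / 2),
            DKern ((2 * l + 1) * n / (2 * (γ + 1))) (2 * π * m / n)) -
         (∑ l ∈ Finset.range ((γ + 1) / 2 - 1),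
            DKern ((2 * l + 1) * n / (2 * (γ - 1))) (2 * π * m / n))) := by
  rw [EnergyCircAux.partI n γ hγ hn, EnergyCircAux.partII n γ hγ hn]
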